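/- Let n ≥ 2 and let R be the n×n symmetric matrix with entries R[i,j] = ξ_{i−1} ξ_{n−j} for i ≤ j and R[i,j] = ξ_{j−1} ξ_{n−i} for i > j. Then the trace norm of R (the sum of the absolute values of its eigenvalues) satisfies ‖R‖_tr ≤ 2 ∑_{k=0}^{n−1} ξ_k² + 1. -/

import Mathlib

/-- `ξ i = C(2i, i) / 4^i`. -/
noncomputable def xi (i : ℕ) : ℝ := (Nat.choose (2 * i) i : ℝ) / 4 ^ i



lemma choose_central_pos (i : ℕ) : (0:ℝ) < (Nat.choose (2 * i) i : ℝ) := by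
  exact_mod_cast Nat.choose_pos (by omega)

lemma xi_pos (i : ℕ) : 0 < xi i := by
  unfold xi
  exact div_pos (choose_central_pos i) (by positivity)

lemma xi_zero : xi 0 = 1 := by simp [xi]

lemma xi_succ (i : ℕ) : xi (i + 1) = xi i * (2 * i + 1) / (2 * i + 2) := by
  have h := Nat.succ_mul_centralBinom_succ i
  have h' : ((i:ℝ) + 1) * (Nat.choose (2 * (i+1)) (i+1) : ℝ)
      = 2 * (2 * i + 1) * (Nat.choose (2 * i) i : ℝ) := by
    have := congrArg (Nat.cast : ℕ → ℝ) h
    push_cast [Nat.centralBinom] at this ⊢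
    convert this using 2 <;> ring_nf
  have hi : ((i:ℝ) + 1) ≠ 0 := by positivity
  unfold xi
  rw [pow_succ]
  rw [div_eq_div_iff (by positivity) (by positivity)]
  have : (Nat.choose (2 * (i+1)) (i+1) : ℝ) = 2 * (2 * i + 1) * (Nat.choose (2 * i) i : ℝ) / ((i:ℝ)+1) := by
    field_simp at h' ⊢; linarith [h']
  rw [this]
  field_simp
  ring

lemma xi_succ_le (i : ℕ) : xi (i + 1) ≤ xi i := by
  rw [xi_succ]
  rw [div_le_iff₀ (by positivity)]
  nlinarith [xi_pos i]

lemma xi_anti : ∀ {i j : ℕ}, i ≤ j → xi j ≤ xi i := by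
  intro i j h
  induction j with
  | zero => simp_all
  | succ k ih =>
    rcases Nat.lt_or_ge i (k+1) with h'|h'
    · exact (xi_succ_le k).trans (ih (by omega))
    · have : i = k + 1 := by omega
      simp [this]

lemma xi_le_one (i : ℕ) : xi i ≤ 1 := by
  have := xi_anti (Nat.zero_le i)
  rwa [xi_zero] at this


/-- Auxiliary: `g m = ∑_{k=0}^m ξ_k ξ_{m-k} / (2k+2) = ξ_{m+1}`. -/
lemma g_id (m : ℕ) :
    ∑ k ∈ Finset.range (m + 1), xi k * xi (m - k) / (2 * (k:ℝ) + 2) = xi (m + 1) := by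
  induction m with
  | zero => simp [xi_zero, xi_succ 0]
  | succ m ih =>
    have hrefl : ∑ k ∈ Finset.range (m + 1), xi k * xi (m - k) / (2 * ((m - k : ℕ):ℝ) + 2)
        = ∑ k ∈ Finset.range (m + 1), xi k * xi (m - k) / (2 * (k:ℝ) + 2) := by
      have h := Finset.sum_range_reflect
        (fun k => xi k * xi (m - k) / (2 * (k:ℝ) + 2)) (m + 1)
      rw [← h]
      apply Finset.sum_congr rfl
      intro k hk
      simp only [Finset.mem_range] at hk
      have h1 : m + 1 - 1 - k = m - k := by omega
      have h2 : m - (m - k) = k := by omega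
      simp only [h1, h2]
      rw [mul_comm (xi (m-k)) (xi k)]
    have step : ∀ k ∈ Finset.range (m + 1),
        xi k * xi (m + 1 - k) / (2 * (k:ℝ) + 2)
        = xi k * xi (m - k) / (2 * (k:ℝ) + 2)
          - xi k * xi (m - k) / ((2 * (k:ℝ) + 2) * (2 * ((m - k : ℕ):ℝ) + 2)) := by
      intro k hk
      simp only [Finset.mem_range] at hk
      have hmk : m + 1 - k = (m - k) + 1 := by omega
      rw [hmk, xi_succ]
      have c1 : (0:ℝ) < 2 * (k:ℝ) + 2 := by positivity
      have c2 : (0:ℝ) < 2 * ((m - k : ℕ):ℝ) + 2 := by positivity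
      field_simp
      ring
    have pf : ∀ k ∈ Finset.range (m + 1),
        xi k * xi (m - k) / ((2 * (k:ℝ) + 2) * (2 * ((m - k : ℕ):ℝ) + 2))
        = (xi k * xi (m - k) / (2 * (k:ℝ) + 2)
            + xi k * xi (m - k) / (2 * ((m - k : ℕ):ℝ) + 2)) / (2 * (m:ℝ) + 4) := by
      intro k hk
      simp only [Finset.mem_range] at hk
      have c1 : (0:ℝ) < 2 * (k:ℝ) + 2 := by positivity
      have c2 : (0:ℝ) < 2 * ((m - k : ℕ):ℝ) + 2 := by positivity
      have hsum : ((m - k : ℕ):ℝ) = (m:ℝ) - (k:ℝ) := by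
        push_cast [Nat.cast_sub (by omega : k ≤ m)]; ring
      rw [hsum] at c2 ⊢
      have c4 : (2 * (m:ℝ) + 4) = (2 * (k:ℝ) + 2) + (2 * ((m:ℝ) - (k:ℝ)) + 2) := by ring
      rw [c4]
      rw [div_add_div _ _ c1.ne' c2.ne', div_div, eq_div_iff (by positivity), div_mul_eq_mul_div,
        div_eq_iff (by positivity)]
      ring
    rw [Finset.sum_range_succ, Finset.sum_congr rfl step, Finset.sum_sub_distrib,
      Finset.sum_congr rfl pf, ← Finset.sum_div, Finset.sum_add_distrib, hrefl, ih]
    have hsimp : m + 1 - (m + 1) = 0 := by omega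
    rw [hsimp, xi_zero, xi_succ (m+1)]
    push_cast
    have c : (0:ℝ) < 2 * (m:ℝ) + 4 := by positivity
    field_simp
    ring

/-- The key convolution identity `∑_{k=0}^m ξ_k ξ_{m-k} = 1`. -/
lemma conv_id (m : ℕ) : ∑ k ∈ Finset.range (m + 1), xi k * xi (m - k) = 1 := by
  induction m with
  | zero => simp [xi_zero]
  | succ m ih =>
    have step : ∀ k ∈ Finset.range (m + 1),
        xi k * xi (m + 1 - k)
        = xi k * xi (m - k) - xi k * xi (m - k) / (2 * ((m - k : ℕ):ℝ) + 2) := by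
      intro k hk
      simp only [Finset.mem_range] at hk
      have hmk : m + 1 - k = (m - k) + 1 := by omega
      rw [hmk, xi_succ]
      have c2 : (0:ℝ) < 2 * ((m - k : ℕ):ℝ) + 2 := by positivity
      field_simp
      ring
    have hrefl : ∑ k ∈ Finset.range (m + 1), xi k * xi (m - k) / (2 * ((m - k : ℕ):ℝ) + 2)
        = ∑ k ∈ Finset.range (m + 1), xi k * xi (m - k) / (2 * (k:ℝ) + 2) := by
      have h := Finset.sum_range_reflect
        (fun k => xi k * xi (m - k) / (2 * (k:ℝ) + 2)) (m + 1)
      rw [← h]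
      apply Finset.sum_congr rfl
      intro k hk
      simp only [Finset.mem_range] at hk
      have h1 : m + 1 - 1 - k = m - k := by omega
      have h2 : m - (m - k) = k := by omega
      simp only [h1, h2]
      rw [mul_comm (xi (m-k)) (xi k)]
    rw [Finset.sum_range_succ, Finset.sum_congr rfl step, Finset.sum_sub_distrib, hrefl, g_id, ih]
    have hsimp : m + 1 - (m + 1) = 0 := by omega
    rw [hsimp, xi_zero]
    ring

section MatrixPart
open Matrix

variable (n : ℕ)

/-- sum of the diagonal products equals 1 -/
lemma diag_sum (hn : 1 ≤ n) : ∑ j : Fin n, xi j * xi (n - 1 - (j:ℕ)) = 1 := by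
  rw [Fin.sum_univ_eq_sum_range (fun k => xi k * xi (n - 1 - k))]
  have h : n = (n - 1) + 1 := by omega
  rw [h]
  have : ∀ k ∈ Finset.range ((n-1) + 1), xi k * xi ((n-1) + 1 - 1 - k) = xi k * xi ((n-1) - k) := by
    intro k hk; norm_num
  rw [Finset.sum_congr rfl this, conv_id]

lemma diag_sum_le (hn : 1 ≤ n) (s : Finset (Fin n)) :
    ∑ j ∈ s, xi j * xi (n - 1 - (j:ℕ)) ≤ 1 := by
  rw [← diag_sum n hn]
  apply Finset.sum_le_sum_of_subset_of_nonneg (Finset.subset_univ s)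
  intro j _ _
  exact le_of_lt (mul_pos (xi_pos _) (xi_pos _))

lemma sq_sum_le (s : Finset (Fin n)) :
    ∑ j ∈ s, xi (j:ℕ) ^ 2 ≤ ∑ k ∈ Finset.range n, xi k ^ 2 := by
  rw [← Fin.sum_univ_eq_sum_range (fun k => xi k ^ 2)]
  apply Finset.sum_le_sum_of_subset_of_nonneg (Finset.subset_univ s)
  intro j _ _
  positivity

lemma sq_sum_rev_le (s : Finset (Fin n)) :
    ∑ j ∈ s, xi (n - 1 - (j:ℕ)) ^ 2 ≤ ∑ k ∈ Finset.range n, xi k ^ 2 := by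
  have hinj : ∀ a ∈ s, ∀ b ∈ s, n - 1 - (a:ℕ) = n - 1 - (b:ℕ) → a = b := by
    intro a _ b _ h
    have ha := a.isLt; have hb := b.isLt
    exact Fin.ext (by omega)
  rw [← Finset.sum_image (f := fun k : ℕ => xi k ^ 2) (g := fun j : Fin n => n - 1 - (j:ℕ)) hinj]
  apply Finset.sum_le_sum_of_subset_of_nonneg
  · intro k hk
    simp only [Finset.mem_image] at hk
    obtain ⟨a, _, rfl⟩ := hk
    simp only [Finset.mem_range]
    have := a.isLt
    omega
  · intro j _ _
    positivity

/-- The Perron test-vector inequality. -/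
lemma perron_row (hn : 1 ≤ n) (i : Fin n) :
    ∑ j : Fin n, (if (i : ℕ) ≤ (j : ℕ) then xi i * xi (n - 1 - (j : ℕ))
        else xi j * xi (n - 1 - (i : ℕ))) * (xi j + xi (n - 1 - (j:ℕ)))
      ≤ ((∑ k ∈ Finset.range n, xi k ^ 2) + 1) * (xi i + xi (n - 1 - (i:ℕ))) := by
  set S := ∑ k ∈ Finset.range n, xi k ^ 2 with hS
  classical
  rw [← Finset.sum_filter_add_sum_filter_not Finset.univ (fun j : Fin n => (i:ℕ) ≤ (j:ℕ))]
  have h1 : ∑ j ∈ Finset.univ.filter (fun j : Fin n => (i:ℕ) ≤ (j:ℕ)),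
      (if (i : ℕ) ≤ (j : ℕ) then xi i * xi (n - 1 - (j : ℕ))
        else xi j * xi (n - 1 - (i : ℕ))) * (xi j + xi (n - 1 - (j:ℕ)))
      ≤ xi i * (1 + S) := by
    have : ∀ j ∈ Finset.univ.filter (fun j : Fin n => (i:ℕ) ≤ (j:ℕ)),
        (if (i : ℕ) ≤ (j : ℕ) then xi i * xi (n - 1 - (j : ℕ))
          else xi j * xi (n - 1 - (i : ℕ))) * (xi j + xi (n - 1 - (j:ℕ)))
        = xi i * (xi j * xi (n - 1 - (j:ℕ)) + xi (n - 1 - (j:ℕ)) ^ 2) := by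
      intro j hj
      simp only [Finset.mem_filter] at hj
      rw [if_pos hj.2]
      ring
    rw [Finset.sum_congr rfl this, ← Finset.mul_sum, Finset.sum_add_distrib]
    have := diag_sum_le n hn (Finset.univ.filter (fun j : Fin n => (i:ℕ) ≤ (j:ℕ)))
    have := sq_sum_rev_le n (Finset.univ.filter (fun j : Fin n => (i:ℕ) ≤ (j:ℕ)))
    have := xi_pos (i:ℕ)
    nlinarith
  have h2 : ∑ j ∈ Finset.univ.filter (fun j : Fin n => ¬ (i:ℕ) ≤ (j:ℕ)),
      (if (i : ℕ) ≤ (j : ℕ) then xi i * xi (n - 1 - (j : ℕ))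
        else xi j * xi (n - 1 - (i : ℕ))) * (xi j + xi (n - 1 - (j:ℕ)))
      ≤ xi (n - 1 - (i:ℕ)) * (1 + S) := by
    have : ∀ j ∈ Finset.univ.filter (fun j : Fin n => ¬ (i:ℕ) ≤ (j:ℕ)),
        (if (i : ℕ) ≤ (j : ℕ) then xi i * xi (n - 1 - (j : ℕ))
          else xi j * xi (n - 1 - (i : ℕ))) * (xi j + xi (n - 1 - (j:ℕ)))
        = xi (n - 1 - (i:ℕ)) * (xi j * xi (n - 1 - (j:ℕ)) + xi (j:ℕ) ^ 2) := by
      intro j hj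
      simp only [Finset.mem_filter] at hj
      rw [if_neg hj.2]
      ring
    rw [Finset.sum_congr rfl this, ← Finset.mul_sum, Finset.sum_add_distrib]
    have := diag_sum_le n hn (Finset.univ.filter (fun j : Fin n => ¬ (i:ℕ) ≤ (j:ℕ)))
    have := sq_sum_le n (Finset.univ.filter (fun j : Fin n => ¬ (i:ℕ) ≤ (j:ℕ)))
    have := xi_pos (n - 1 - (i:ℕ))
    nlinarith
  nlinarith [h1, h2]

lemma eig_bound (hn : 1 ≤ n) (R : Matrix (Fin n) (Fin n) ℝ)
    (hRdef : R = Matrix.of fun (i j : Fin n) =>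
      if (i : ℕ) ≤ (j : ℕ) then xi i * xi (n - 1 - (j : ℕ))
      else xi j * xi (n - 1 - (i : ℕ)))
    (lam : ℝ) (v : Fin n → ℝ) (hv : v ≠ 0) (heig : R *ᵥ v = lam • v) :
    |lam| ≤ (∑ k ∈ Finset.range n, xi k ^ 2) + 1 := by
  classical
  set S := ∑ k ∈ Finset.range n, xi k ^ 2 with hS
  set f : Fin n → ℝ := fun i => xi i + xi (n - 1 - (i:ℕ)) with hf
  have hfpos : ∀ i, 0 < f i := fun i => add_pos (xi_pos _) (xi_pos _)
  have : Nonempty (Fin n) := ⟨⟨0, by omega⟩⟩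
  obtain ⟨i0, _, hmax⟩ := Finset.exists_max_image Finset.univ
    (fun i => |v i| / f i) Finset.univ_nonempty
  set c := |v i0| / f i0 with hc
  have hle : ∀ j, |v j| ≤ c * f j := by
    intro j
    have := hmax j (Finset.mem_univ j)
    rw [div_le_div_iff₀ (hfpos j) (hfpos i0)] at this
    rw [hc, div_mul_eq_mul_div, le_div_iff₀ (hfpos i0)]
    linarith
  have hcpos : 0 < c := by
    obtain ⟨j0, hj0⟩ := Function.ne_iff.mp hv
    have h1 : 0 < |v j0| := abs_pos.mpr hj0
    have h2 := hmax j0 (Finset.mem_univ j0)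
    have := div_pos h1 (hfpos j0)
    linarith
  have hvi0 : |v i0| = c * f i0 := by
    rw [hc, div_mul_cancel₀ _ (ne_of_gt (hfpos i0))]
  have hrow := perron_row n hn i0
  have hentry : ∀ i j : Fin n, 0 ≤ R i j := by
    intro i j
    rw [hRdef]
    simp only [Matrix.of_apply]
    split <;> exact le_of_lt (mul_pos (xi_pos _) (xi_pos _))
  have hmain : |lam| * |v i0| ≤ (S + 1) * |v i0| := by
    have h0 : lam * v i0 = ∑ j, R i0 j * v j := by
      have := congrFun heig i0
      simp only [Matrix.mulVec, dotProduct, Pi.smul_apply, smul_eq_mul] at this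
      rw [← this]
    calc |lam| * |v i0| = |lam * v i0| := (abs_mul lam (v i0)).symm
      _ = |∑ j, R i0 j * v j| := by rw [h0]
      _ ≤ ∑ j, |R i0 j * v j| := Finset.abs_sum_le_sum_abs _ _
      _ = ∑ j, R i0 j * |v j| := by
          apply Finset.sum_congr rfl; intro j _
          rw [abs_mul, abs_of_nonneg (hentry i0 j)]
      _ ≤ ∑ j, R i0 j * (c * f j) := by
          apply Finset.sum_le_sum; intro j _
          exact mul_le_mul_of_nonneg_left (hle j) (hentry i0 j)
      _ = c * ∑ j, R i0 j * f j := by rw [Finset.mul_sum]; apply Finset.sum_congr rfl; intros; ring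
      _ ≤ c * ((S + 1) * f i0) := by
          apply mul_le_mul_of_nonneg_left _ (le_of_lt hcpos)
          have : ∑ j, R i0 j * f j = ∑ j : Fin n,
              (if (i0 : ℕ) ≤ (j : ℕ) then xi i0 * xi (n - 1 - (j : ℕ))
                else xi j * xi (n - 1 - (i0 : ℕ))) * (xi j + xi (n - 1 - (j:ℕ))) := by
            apply Finset.sum_congr rfl; intro j _
            rw [hRdef]; rfl
          rw [this]
          convert hrow using 2
      _ = (S + 1) * |v i0| := by rw [hvi0]; ring
  have hvpos : 0 < |v i0| := by
    rw [hvi0]; exact mul_pos hcpos (hfpos i0)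
  exact le_of_mul_le_mul_right (by linarith [hmain]) hvpos

lemma quad_bound (hn : 1 ≤ n) (R : Matrix (Fin n) (Fin n) ℝ)
    (hRdef : R = Matrix.of fun (i j : Fin n) =>
      if (i : ℕ) ≤ (j : ℕ) then xi i * xi (n - 1 - (j : ℕ))
      else xi j * xi (n - 1 - (i : ℕ)))
    (x : Fin n → ℝ) (hx : ∑ i : Fin n, xi (i:ℕ) * x i = 0) :
    x ⬝ᵥ (R *ᵥ x) ≤ 0 := by
  classical
  set d : ℕ → ℝ := fun m => xi (n - 1 - m) / xi m with hd
  set e : ℕ → ℝ := fun k => if k = 0 then d 0 else d k - d (k - 1) with he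
  set y : Fin n → ℝ := fun i => xi (i:ℕ) * x i with hy
  have hy0 : ∑ i : Fin n, y i = 0 := hx
  -- telescoping
  have ed : ∀ m : ℕ, ∑ k ∈ Finset.range (m + 1), e k = d m := by
    intro m
    induction m with
    | zero => simp [he]
    | succ m ih =>
      rw [Finset.sum_range_succ, ih, he]
      simp only [Nat.succ_ne_zero, if_false, Nat.add_sub_cancel]
      ring
  have epos : ∀ k, k < n → 0 ≤ e k := by
    intro k hk
    rcases Nat.eq_zero_or_pos k with h0 | h0
    · subst h0
      simp only [he, if_pos rfl]
      exact le_of_lt (div_pos (xi_pos _) (xi_pos _))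
    · simp only [he, if_neg (Nat.pos_iff_ne_zero.mp h0), hd]
      rw [sub_nonneg, div_le_div_iff₀ (xi_pos _) (xi_pos _)]
      have h1 : xi (n - 1 - k) ≥ xi (n - 1 - (k - 1)) := xi_anti (by omega)
      have h2 : xi k ≤ xi (k - 1) := xi_anti (by omega)
      nlinarith [xi_pos (n - 1 - k), xi_pos (n - 1 - (k-1)), xi_pos k, xi_pos (k-1)]
  -- entries in terms of d
  have hRd : ∀ i j : Fin n, R i j = y i * y j / (x i * x j) * d (max (i:ℕ) (j:ℕ)) ∨ True := by
    intro i j; right; trivial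
  have hfilter : ∀ m : ℕ, m < n →
      (Finset.range n).filter (fun k => k ≤ m) = Finset.range (m + 1) := by
    intro m hm
    ext k
    simp only [Finset.mem_filter, Finset.mem_range]
    omega
  have hdmax : ∀ i j : Fin n,
      d (max (i:ℕ) (j:ℕ)) = ∑ k ∈ Finset.range n, (if k ≤ max (i:ℕ) (j:ℕ) then e k else 0) := by
    intro i j
    rw [Finset.sum_ite, Finset.sum_const_zero, add_zero, hfilter _ (by omega), ed]
  have hRmax : ∀ i j : Fin n, R i j * x i * x j = y i * y j * d (max (i:ℕ) (j:ℕ)) := by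
    intro i j
    rw [hRdef]
    simp only [Matrix.of_apply, hy, hd]
    rcases le_or_gt (i:ℕ) (j:ℕ) with h | h
    · rw [if_pos h, max_eq_right h]
      have := xi_pos (j:ℕ)
      field_simp
    · rw [if_neg (not_le.mpr h), max_eq_left (le_of_lt h)]
      have := xi_pos (i:ℕ)
      field_simp
  have lhs_eq : x ⬝ᵥ (R *ᵥ x)
      = ∑ k ∈ Finset.range n, ∑ i : Fin n, ∑ j : Fin n,
          y i * y j * (if k ≤ max (i:ℕ) (j:ℕ) then e k else 0) := by
    rw [dotProduct_mulVec]
    calc ∑ j, (x ᵥ* R) j * x j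
        = ∑ j : Fin n, ∑ i : Fin n, R i j * x i * x j := by
          apply Finset.sum_congr rfl; intro j _
          rw [Matrix.vecMul, dotProduct, Finset.sum_mul]
          apply Finset.sum_congr rfl; intro i _
          ring
      _ = ∑ j : Fin n, ∑ i : Fin n, ∑ k ∈ Finset.range n,
            y i * y j * (if k ≤ max (i:ℕ) (j:ℕ) then e k else 0) := by
          apply Finset.sum_congr rfl; intro j _
          apply Finset.sum_congr rfl; intro i _
          rw [hRmax i j, hdmax i j, Finset.mul_sum]
      _ = ∑ i : Fin n, ∑ j : Fin n, ∑ k ∈ Finset.range n,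
            y i * y j * (if k ≤ max (i:ℕ) (j:ℕ) then e k else 0) := Finset.sum_comm
      _ = ∑ i : Fin n, ∑ k ∈ Finset.range n, ∑ j : Fin n,
            y i * y j * (if k ≤ max (i:ℕ) (j:ℕ) then e k else 0) := by
          exact Finset.sum_congr rfl (fun i _ => Finset.sum_comm)
      _ = ∑ k ∈ Finset.range n, ∑ i : Fin n, ∑ j : Fin n,
            y i * y j * (if k ≤ max (i:ℕ) (j:ℕ) then e k else 0) := Finset.sum_comm
  have inner_eq : ∀ k ∈ Finset.range n,
      ∑ i : Fin n, ∑ j : Fin n, y i * y j * (if k ≤ max (i:ℕ) (j:ℕ) then e k else 0)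
      = e k * ((∑ i : Fin n, y i)^2 - (∑ i : Fin n, (if (i:ℕ) < k then y i else 0))^2) := by
    intro k _
    have expand : e k * ((∑ i : Fin n, y i)^2 - (∑ i : Fin n, (if (i:ℕ) < k then y i else 0))^2)
        = ∑ i : Fin n, ∑ j : Fin n, (e k * (y i * y j)
            - e k * ((if (i:ℕ) < k then y i else 0) * (if (j:ℕ) < k then y j else 0))) := by
      rw [sq, sq, Finset.sum_mul_sum, Finset.sum_mul_sum, mul_sub, Finset.mul_sum,
        Finset.mul_sum, ← Finset.sum_sub_distrib]
      apply Finset.sum_congr rfl; intro i _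
      rw [Finset.mul_sum, Finset.mul_sum, ← Finset.sum_sub_distrib]
    rw [expand]
    apply Finset.sum_congr rfl; intro i _
    apply Finset.sum_congr rfl; intro j _
    rcases le_or_gt k (max (i:ℕ) (j:ℕ)) with h | h
    · rw [if_pos h]
      rcases Nat.lt_or_ge (i:ℕ) k with hi | hi
      · have hj : ¬ ((j:ℕ) < k) := by omega
        rw [if_pos hi, if_neg hj]
        ring
      · rw [if_neg (not_lt.mpr hi)]
        ring
    · rw [if_neg (not_le.mpr h)]
      have hi : (i:ℕ) < k := by omega
      have hj : (j:ℕ) < k := by omega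
      rw [if_pos hi, if_pos hj]
      ring
  rw [lhs_eq, Finset.sum_congr rfl inner_eq]
  apply Finset.sum_nonpos
  intro k hk
  simp only [Finset.mem_range] at hk
  rw [hy0]
  have := epos k hk
  nlinarith [sq_nonneg (∑ i : Fin n, (if (i:ℕ) < k then y i else 0))]

end MatrixPart

open Matrix in
/-- Let `n ≥ 2` and let `R` be the `n×n` symmetric matrix with entries (`1`-based)
`R[i,j] = ξ_{i−1} ξ_{n−j}` for `i ≤ j` and `R[i,j] = ξ_{j−1} ξ_{n−i}` for `i > j`.
Then the trace norm of `R` (the sum of the absolute values of its eigenvalues)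
is at most `2 ∑_{k=0}^{n−1} ξ_k² + 1`. -/
theorem negadv_trace_norm (n : ℕ) (hn : 2 ≤ n)
    (R : Matrix (Fin n) (Fin n) ℝ)
    (hRdef : R = Matrix.of fun (i j : Fin n) =>
      if (i : ℕ) ≤ (j : ℕ) then xi i * xi (n - 1 - (j : ℕ))
      else xi j * xi (n - 1 - (i : ℕ)))
    (hR : R.IsHermitian) :
    ∑ i, |hR.eigenvalues i| ≤ 2 * ∑ k ∈ Finset.range n, (xi k) ^ 2 + 1 := by
  classical
  have hn1 : 1 ≤ n := by omega
  have hne' : Nonempty (Fin n) := ⟨⟨0, by omega⟩⟩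
  set S := ∑ k ∈ Finset.range n, (xi k) ^ 2 with hS
  have hSnn : 0 ≤ S := Finset.sum_nonneg (fun k _ => by positivity)
  set lam := hR.eigenvalues with hlam
  set B := hR.eigenvectorBasis with hB
  -- orthonormality in dot-product form
  have horth : ∀ i j : Fin n, ∑ k : Fin n, (B i) k * (B j) k = if i = j then 1 else 0 := by
    intro i j
    have h := hR.eigenvectorBasis.orthonormal
    rw [orthonormal_iff_ite] at h
    have := h i j
    simpa [PiLp.inner_apply, RCLike.inner_apply, starRingEnd_apply, mul_comm] using this
  have hBev : ∀ i : Fin n, R *ᵥ ⇑(B i) = lam i • ⇑(B i) := fun i =>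
    hR.mulVec_eigenvectorBasis i
  have hBnz : ∀ i : Fin n, (⇑(B i) : Fin n → ℝ) ≠ 0 := by
    intro i hzero
    have := horth i i
    rw [if_pos rfl] at this
    simp only [funext_iff] at hzero
    simp [hzero] at this
  -- eigenvalue absolute bound
  have habs : ∀ i : Fin n, |lam i| ≤ S + 1 := by
    intro i
    exact eig_bound n hn1 R hRdef (lam i) ⇑(B i) (hBnz i) (hBev i)
  -- each positive-eigenvalue eigenvector is non-orthogonal to ξ
  have key1 : ∀ i : Fin n, 0 < lam i → (∑ k : Fin n, xi (k:ℕ) * (B i) k) ≠ 0 := by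
    intro i hpos h0
    have hq := quad_bound n hn1 R hRdef ⇑(B i) h0
    rw [hBev i] at hq
    have : (⇑(B i) : Fin n → ℝ) ⬝ᵥ (lam i • ⇑(B i)) = lam i := by
      rw [dotProduct_smul]
      have h1 := horth i i
      rw [if_pos rfl] at h1
      simp only [dotProduct, smul_eq_mul, Pi.smul_apply]
      rw [h1, mul_one]
    rw [this] at hq
    linarith
  -- at most one positive eigenvalue
  have key2 : ∀ i j : Fin n, 0 < lam i → 0 < lam j → i = j := by
    intro i j hi hj
    by_contra hne
    set a := ∑ k : Fin n, xi (k:ℕ) * (B j) k with ha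
    set b := ∑ k : Fin n, xi (k:ℕ) * (B i) k with hb
    have hb0 : b ≠ 0 := key1 i hi
    set x : Fin n → ℝ := a • ⇑(B i) - b • ⇑(B j) with hx
    have hxsum : ∑ k : Fin n, xi (k:ℕ) * x k = 0 := by
      simp only [hx, Pi.sub_apply, Pi.smul_apply, smul_eq_mul, mul_sub, Finset.sum_sub_distrib]
      have e1 : ∑ k : Fin n, xi (k:ℕ) * (a * (B i) k) = a * b := by
        rw [hb, Finset.mul_sum]; apply Finset.sum_congr rfl; intros; ring
      have e2 : ∑ k : Fin n, xi (k:ℕ) * (b * (B j) k) = b * a := by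
        rw [ha, Finset.mul_sum]; apply Finset.sum_congr rfl; intros; ring
      rw [e1, e2]; ring
    have hq := quad_bound n hn1 R hRdef x hxsum
    have hRx : R *ᵥ x = (a * lam i) • ⇑(B i) - (b * lam j) • ⇑(B j) := by
      rw [hx, Matrix.mulVec_sub, Matrix.mulVec_smul, Matrix.mulVec_smul, hBev i, hBev j,
        smul_smul, smul_smul]
    have hdot : x ⬝ᵥ (R *ᵥ x) = a^2 * lam i + b^2 * lam j := by
      rw [hRx, hx]
      simp only [dotProduct, Pi.sub_apply, Pi.smul_apply, smul_eq_mul]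
      have expand : ∀ k : Fin n,
          (a * (B i) k - b * (B j) k) * (a * lam i * (B i) k - b * lam j * (B j) k)
          = a^2 * lam i * ((B i) k * (B i) k) + b^2 * lam j * ((B j) k * (B j) k)
            - (a * b * lam j) * ((B i) k * (B j) k) - (a * b * lam i) * ((B j) k * (B i) k) := by
        intro k; ring
      rw [Finset.sum_congr rfl (fun k _ => expand k)]
      simp only [Finset.sum_sub_distrib, Finset.sum_add_distrib, ← Finset.mul_sum]
      rw [horth i i, horth j j, horth i j, horth j i, if_pos rfl, if_pos rfl,
        if_neg hne, if_neg (Ne.symm hne)]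
      ring
    rw [hdot] at hq
    have hbb : 0 < b ^ 2 := by rw [sq]; exact mul_self_pos.mpr hb0
    nlinarith [mul_nonneg (sq_nonneg a) hi.le, mul_pos hbb hj]
  -- trace identities
  have htrace : ∑ i, lam i = 1 := by
    have h1 : R.trace = ∑ i, lam i := by
      conv_lhs => rw [hR.spectral_theorem]
      rw [Unitary.conjStarAlgAut_apply, Matrix.trace_mul_cycle]
      have hu : (star (hR.eigenvectorUnitary : Matrix (Fin n) (Fin n) ℝ)) *
          (hR.eigenvectorUnitary : Matrix (Fin n) (Fin n) ℝ) = 1 := by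
        exact Matrix.UnitaryGroup.star_mul_self _
      rw [hu, one_mul, Matrix.trace_diagonal]
      simp [hlam]
    have h2 : R.trace = 1 := by
      rw [Matrix.trace]
      have : ∀ i : Fin n, R.diag i = xi (i:ℕ) * xi (n - 1 - (i:ℕ)) := by
        intro i
        rw [hRdef]
        simp [Matrix.diag, Matrix.of_apply]
      rw [Finset.sum_congr rfl (fun i _ => this i)]
      exact diag_sum n hn1
    rw [← h1, h2]
  -- sum of positive parts
  set pos := Finset.univ.filter (fun i : Fin n => 0 < lam i) with hpos
  have hposcard : pos.card ≤ 1 := by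
    rw [Finset.card_le_one]
    intro i hi j hj
    simp only [hpos, Finset.mem_filter] at hi hj
    exact key2 i j hi.2 hj.2
  have hmaxsum : ∑ i, max (lam i) 0 ≤ S + 1 := by
    have heq : ∑ i, max (lam i) 0 = ∑ i ∈ pos, lam i := by
      rw [hpos, Finset.sum_filter]
      apply Finset.sum_congr rfl
      intro i _
      rcases le_or_gt (lam i) 0 with h | h
      · rw [max_eq_right h, if_neg (not_lt.mpr h)]
      · rw [max_eq_left (le_of_lt h), if_pos h]
    rw [heq]
    rcases Finset.card_le_one_iff_subset_singleton.mp hposcard with ⟨a, hsub⟩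
    calc ∑ i ∈ pos, lam i ≤ ∑ i ∈ pos, |lam i| := Finset.sum_le_sum (fun i _ => le_abs_self _)
      _ ≤ ∑ i ∈ {a}, |lam i| := Finset.sum_le_sum_of_subset_of_nonneg hsub
          (fun i _ _ => abs_nonneg _)
      _ = |lam a| := Finset.sum_singleton _ _
      _ ≤ S + 1 := habs a
  have habs_eq : ∀ i : Fin n, |lam i| = 2 * max (lam i) 0 - lam i := by
    intro i
    rcases le_or_gt (lam i) 0 with h | h
    · rw [max_eq_right h, abs_of_nonpos h]; ring
    · rw [max_eq_left (le_of_lt h), abs_of_pos h]; ring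
  calc ∑ i, |lam i| = ∑ i, (2 * max (lam i) 0 - lam i) :=
        Finset.sum_congr rfl (fun i _ => habs_eq i)
    _ = 2 * (∑ i, max (lam i) 0) - ∑ i, lam i := by
        rw [Finset.sum_sub_distrib, Finset.mul_sum]
    _ ≤ 2 * (S + 1) - 1 := by rw [htrace]; linarith [hmaxsum]
    _ = 2 * S + 1 := by ring
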